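/- Let g(z) = (1-z)^{is} = exp(is·Log(1-z)) for a nonzero real s, defined on the unit disk D using the principal branch of logarithm. Then the cluster set of g at the point z = 1, defined as C₁(g) = ⋂_{0<δ<1} closure(g(D ∩ D(1,δ))), equals the closed annulus {w ∈ ℂ : e^{-π|s|/2} ≤ |w| ≤ e^{π|s|/2}}. -/

import Mathlib

open Complex Metric Real Set

private lemma aux_sq (t cφ sφ : ℝ) (h1 : sφ ^ 2 + cφ ^ 2 = 1) (h0 : 0 < t)
    (h2 : t < 2 * cφ) :
    (1 - t * cφ) * (1 - t * cφ) + (0 - t * sφ) * (0 - t * sφ) < 1 := by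
  nlinarith [mul_lt_mul_of_pos_left h2 h0]

/-- The cluster set of `(1-z)^{is}` at `z = 1` is the closed annulus
`e^{-π|s|/2} ≤ |w| ≤ e^{π|s|/2}`. -/
theorem clusterSet_one_sub_pow_I_mul (s : ℝ) (hs : s ≠ 0)
    (g : ℂ → ℂ) (hg : ∀ z : ℂ, g z = Complex.exp (Complex.I * s * Complex.log (1 - z))) :
    (⋂ δ ∈ Ioo (0:ℝ) 1, closure (g '' (ball (0:ℂ) 1 ∩ ball (1:ℂ) δ))) =
      {w : ℂ | Real.exp (-(π * |s|) / 2) ≤ ‖w‖ ∧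
               ‖w‖ ≤ Real.exp (π * |s| / 2)} := by
  have hπ : (0:ℝ) < π := Real.pi_pos
  have hs' : (0:ℝ) < |s| := abs_pos.mpr hs
  ext w
  simp only [mem_iInter, mem_setOf_eq, mem_Ioo]
  constructor
  · intro h
    have h2 := h (1/2) ⟨by norm_num, by norm_num⟩
    have hcl : IsClosed {w : ℂ | Real.exp (-(π * |s|) / 2) ≤ ‖w‖ ∧
               ‖w‖ ≤ Real.exp (π * |s| / 2)} := by
      have : {w : ℂ | Real.exp (-(π * |s|) / 2) ≤ ‖w‖ ∧
               ‖w‖ ≤ Real.exp (π * |s| / 2)} =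
          (fun w : ℂ => ‖w‖) ⁻¹' (Icc (Real.exp (-(π * |s|) / 2)) (Real.exp (π * |s| / 2))) := rfl
      rw [this]
      exact isClosed_Icc.preimage continuous_norm
    refine hcl.closure_subset_iff.mpr ?_ h2
    rintro _ ⟨z, ⟨hz1, _⟩, rfl⟩
    rw [mem_ball_zero_iff] at hz1
    set u : ℂ := 1 - z with hu
    have hre : 0 ≤ u.re := by
      have := Complex.re_le_norm z
      simp only [hu, Complex.sub_re, Complex.one_re]
      linarith [this.trans_lt hz1]
    have harg : |Complex.arg u| ≤ π / 2 := Complex.abs_arg_le_pi_div_two_iff.mpr hre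
    have habs : ‖g z‖ = Real.exp (-(s * Complex.arg u)) := by
      rw [hg z, Complex.norm_exp]
      congr 1
      simp [Complex.mul_re, Complex.mul_im, Complex.log_im, hu]
    have hb : |s * Complex.arg u| ≤ π * |s| / 2 := by
      rw [abs_mul]
      nlinarith [abs_nonneg s, abs_nonneg (Complex.arg u)]
    rw [abs_le] at hb
    constructor
    · rw [habs]
      apply Real.exp_le_exp.mpr
      linarith
    · rw [habs]
      apply Real.exp_le_exp.mpr
      linarith
  · rintro ⟨hw1, hw2⟩ δ ⟨hδ0, hδ1⟩
    rw [Metric.mem_closure_iff]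
    intro ε hε
    set r := ‖w‖ with hr
    have hr0 : 0 < r := lt_of_lt_of_le (Real.exp_pos _) hw1
    set θ := Complex.arg w with hθ
    set b := Real.log r with hbdef
    have hb : |b| ≤ π * |s| / 2 := by
      rw [abs_le]
      constructor
      · have h1 := Real.log_le_log (Real.exp_pos (-(π * |s|) / 2)) hw1
        rw [Real.log_exp] at h1
        linarith
      · have h1 := Real.log_le_log hr0 hw2
        rwa [Real.log_exp] at h1
    -- choose η
    have hcont : ContinuousAt (fun η : ℝ => Real.exp (b * (1 - η))) 0 := by fun_prop
    rw [Metric.continuousAt_iff] at hcont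
    obtain ⟨d, hd0, hd⟩ := hcont ε hε
    set η := min (d / 2) (1 / 2) with hηdef
    have hη0 : 0 < η := lt_min (by linarith) (by norm_num)
    have hη1 : η < 1 := lt_of_le_of_lt (min_le_right _ _) (by norm_num)
    have hηd : dist η 0 < d := by
      rw [Real.dist_eq, sub_zero, abs_of_pos hη0]
      exact lt_of_le_of_lt (min_le_left _ _) (by linarith)
    have hclose : |Real.exp (b * (1 - η)) - r| < ε := by
      have h5 := hd hηd
      rw [Real.dist_eq, show b * (1 - (0:ℝ)) = b by ring, Real.exp_log hr0] at h5
      exact h5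
    set φ := -(b / s) * (1 - η) with hφdef
    have hφ : |φ| < π / 2 := by
      have h1 : |φ| = |b| / |s| * (1 - η) := by
        rw [hφdef, abs_mul, abs_neg, abs_div, abs_of_pos (by linarith : (0:ℝ) < 1 - η)]
      have h2 : |b| / |s| ≤ π / 2 := by
        rw [div_le_iff₀ hs']
        nlinarith
      rw [h1]
      nlinarith
    have hφ' := abs_lt.mp hφ
    have hcos : 0 < Real.cos φ :=
      Real.cos_pos_of_mem_Ioo ⟨by linarith [hφ'.1], hφ'.2⟩
    have hsφ : -(s * φ) = b * (1 - η) := by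
      rw [hφdef]; field_simp
    -- choose m
    set L := Real.log (min δ (2 * Real.cos φ)) with hLdef
    have hmin0 : 0 < min δ (2 * Real.cos φ) := lt_min hδ0 (by linarith)
    have h2π : (0:ℝ) < 2 * π := by linarith
    obtain ⟨m, hm⟩ : ∃ m : ℤ, (θ - 2 * π * m) / s < L := by
      rcases hs.lt_or_gt with h | h
      · obtain ⟨m, hm⟩ := exists_int_lt ((θ - s * L) / (2 * π))
        refine ⟨m, ?_⟩
        have hm2 : (m : ℝ) * (2 * π) < θ - s * L := (lt_div_iff₀ h2π).mp hm
        rw [div_lt_iff_of_neg h]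
        linarith
      · obtain ⟨m, hm⟩ := exists_int_gt ((θ - s * L) / (2 * π))
        refine ⟨m, ?_⟩
        have hm2 : θ - s * L < (m : ℝ) * (2 * π) := (div_lt_iff₀ h2π).mp hm
        rw [div_lt_iff₀ h]
        linarith
    set x := (θ - 2 * π * m) / s with hxdef
    have hsx : s * x = θ - 2 * π * m := by rw [hxdef]; field_simp
    set t := Real.exp x with htdef
    have ht0 : 0 < t := Real.exp_pos x
    have htlt : t < min δ (2 * Real.cos φ) := by
      calc t < Real.exp L := Real.exp_lt_exp.mpr hm
        _ = min δ (2 * Real.cos φ) := Real.exp_log hmin0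
    set c : ℂ := (x : ℂ) + (φ : ℂ) * Complex.I with hcdef
    have hcre : c.re = x := by simp [hcdef]
    have hcim : c.im = φ := by simp [hcdef]
    set z : ℂ := 1 - Complex.exp c with hzdef
    have hure : (Complex.exp c).re = t * Real.cos φ := by
      rw [Complex.exp_re, hcre, hcim, htdef]
    have huim : (Complex.exp c).im = t * Real.sin φ := by
      rw [Complex.exp_im, hcre, hcim, htdef]
    refine ⟨g z, ⟨z, ⟨?_, ?_⟩, rfl⟩, ?_⟩
    · rw [mem_ball_zero_iff]
      have hsq : ‖z‖ ^ 2 < 1 := by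
        rw [Complex.sq_norm, Complex.normSq_apply, hzdef]
        simp only [Complex.sub_re, Complex.sub_im, Complex.one_re, Complex.one_im, hure, huim]
        have ht2 : t < 2 * Real.cos φ := lt_of_lt_of_le htlt (min_le_right _ _)
        exact aux_sq t (Real.cos φ) (Real.sin φ) (Real.sin_sq_add_cos_sq φ) ht0 ht2
      have h6 := sq_lt_one_iff_abs_lt_one ‖z‖ |>.mp hsq
      rwa [← _root_.abs_of_nonneg (norm_nonneg z)]
    · rw [mem_ball, Complex.dist_eq]
      have : z - 1 = -Complex.exp c := by rw [hzdef]; ring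
      rw [this, norm_neg, Complex.norm_exp, hcre]
      exact lt_of_lt_of_le htlt (min_le_left _ _)
    · -- dist (g z) w < ε
      have hlog : Complex.log (1 - z) = c := by
        rw [hzdef]
        have : (1 : ℂ) - (1 - Complex.exp c) = Complex.exp c := by ring
        rw [this]
        apply Complex.log_exp <;> rw [hcim] <;> [linarith [hφ'.1]; linarith [hφ'.2]]
      have h1 : Complex.I * (s : ℂ) * ((x : ℂ) + (φ : ℂ) * Complex.I) =
          ((-(s * φ) : ℝ) : ℂ) + ((s * x : ℝ) : ℂ) * Complex.I := by
        push_cast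
        linear_combination (s : ℂ) * (φ : ℂ) * Complex.I_mul_I
      have hgz : g z = (Real.exp (-(s * φ)) : ℂ) * Complex.exp ((θ : ℂ) * Complex.I) := by
        rw [hg z, hlog, hcdef, h1, Complex.exp_add, ← Complex.ofReal_exp]
        congr 1
        have h3 : ((s * x : ℝ) : ℂ) = ((θ - 2 * π * m : ℝ) : ℂ) := by
          exact_mod_cast congrArg Complex.ofReal hsx
        rw [h3]
        rw [show ((θ - 2 * π * m : ℝ) : ℂ) * Complex.I =
            (θ : ℂ) * Complex.I + ((-m : ℤ) : ℂ) * (2 * (π : ℂ) * Complex.I) by push_cast; ring]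
        rw [Complex.exp_add, Complex.exp_int_mul_two_pi_mul_I, mul_one]
      have hw' : w = (r : ℂ) * Complex.exp ((θ : ℂ) * Complex.I) :=
        (Complex.norm_mul_exp_arg_mul_I w).symm
      rw [Complex.dist_eq, hgz]
      nth_rewrite 1 [hw']
      rw [show (r : ℂ) * Complex.exp ((θ : ℂ) * Complex.I) -
          ((Real.exp (-(s * φ)) : ℝ) : ℂ) * Complex.exp ((θ : ℂ) * Complex.I) =
          ((r - Real.exp (-(s * φ)) : ℝ) : ℂ) * Complex.exp ((θ : ℂ) * Complex.I) by
        push_cast; ring]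
      rw [norm_mul, Complex.norm_real, Real.norm_eq_abs, Complex.norm_exp_ofReal_mul_I, mul_one, hsφ,
        abs_sub_comm]
      exact hclose
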